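/- If the vector field f of the ODE system ẋ = f(x,t) is globally Lipschitz in x uniformly in t, then the waveform relaxation iteration x^{I+1} solving ẋ_i^{I+1} = f_i(x_i^{I+1}, d_i^I, t) (where d_i^I collects the other components from iteration I) converges uniformly on any finite time interval [0,T] to the unique solution of the full system. -/

import Mathlib

open Set Filter

/-- Convergence of waveform relaxation: if the vector field `f` of the ODE
system `ẋ = f(x,t)` is globally Lipschitz in `x` uniformly in `t`, then the
waveform relaxation iterates `X^{I+1}`, obtained by solving each component ODE
with the other components frozen to the previous iterate, converge uniformly
on any finite time interval `[0,T]` to the unique solution `x` of the full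
system. -/
theorem waveform_relaxation_converges
    (n : ℕ) (T : ℝ) (hT : 0 < T)
    (K : NNReal) (f : (Fin n → ℝ) → ℝ → (Fin n → ℝ))
    (hf : ∀ t : ℝ, LipschitzWith K (fun x => f x t))
    (x0 : Fin n → ℝ)
    -- the exact solution of the coupled system on [0, T]
    (x : ℝ → (Fin n → ℝ)) (hx0 : x 0 = x0)
    (hx : ∀ t ∈ Set.Icc (0 : ℝ) T, HasDerivAt x (f (x t) t) t)
    -- the waveform relaxation iterates
    (X : ℕ → ℝ → (Fin n → ℝ))
    (hX0 : ∀ I, X I 0 = x0)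
    (hXcont : ContinuousOn (X 0) (Set.Icc (0 : ℝ) T))
    (hXiter : ∀ I, ∀ t ∈ Set.Icc (0 : ℝ) T, ∀ i,
      HasDerivAt (fun s => X (I + 1) s i)
        (f (Function.update (X I t) i (X (I + 1) t i)) t i) t) :
    TendstoUniformlyOn (fun I t => X I t) x Filter.atTop (Set.Icc (0 : ℝ) T) := by
  have hK0 : (0 : ℝ) ≤ (K : ℝ) := K.coe_nonneg
  set L : ℝ := 3 * K + 1 with hL
  have hL0 : (0 : ℝ) ≤ L := by positivity
  -- continuity of x on [0,T]
  have hxcont : ContinuousOn x (Set.Icc 0 T) := fun t ht =>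
    (hx t ht).continuousAt.continuousWithinAt
  -- a bound M on the initial error
  obtain ⟨C, hC⟩ : ∃ C, ∀ t ∈ Set.Icc (0:ℝ) T, ‖X 0 t - x t‖ ≤ C :=
    isCompact_Icc.exists_bound_of_continuousOn (hXcont.sub hxcont)
  set M : ℝ := max C 0 with hM
  have hM0 : 0 ≤ M := le_max_right _ _
  have hMC : ∀ t ∈ Set.Icc (0:ℝ) T, ‖X 0 t - x t‖ ≤ M := fun t ht =>
    (hC t ht).trans (le_max_left _ _)
  -- the key inductive estimate
  have key : ∀ I, ∀ t ∈ Set.Icc (0:ℝ) T,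
      ‖X I t - x t‖ ≤ M / 2 ^ I * Real.exp (L * t) := by
    intro I
    induction I with
    | zero =>
      intro t ht
      have h1 : (1:ℝ) ≤ Real.exp (L * t) :=
        Real.one_le_exp (mul_nonneg hL0 ht.1)
      calc ‖X 0 t - x t‖ ≤ M := hMC t ht
        _ ≤ M / 2 ^ 0 * Real.exp (L * t) := by
            rw [pow_zero]
            nlinarith
    | succ I ih =>
      set E : ℝ := M / 2 ^ I with hE
      have hE0 : 0 ≤ E := by positivity
      intro t ht
      -- componentwise estimate
      have comp : ∀ i : Fin n, ∀ η > (0:ℝ), ∀ s ∈ Set.Icc (0:ℝ) T,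
          |X (I+1) s i - x s i| ≤ (E / 2 + η) * (Real.exp (L * s) - 1) := by
        intro i η hη
        -- set up the function u and its derivative
        set u : ℝ → ℝ := fun s => X (I+1) s i - x s i with hu
        set u' : ℝ → ℝ := fun s =>
          f (Function.update (X I s) i (X (I+1) s i)) s i - f (x s) s i with hu'
        have hud : ∀ s ∈ Set.Icc (0:ℝ) T, HasDerivAt u (u' s) s := by
          intro s hs
          exact (hXiter I s hs i).sub ((hasDerivAt_pi.1 (hx s hs)) i)
        have hucont : ContinuousOn u (Set.Icc 0 T) := fun s hs =>
          (hud s hs).continuousAt.continuousWithinAt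
        have hud' : ∀ s ∈ Set.Ico (0:ℝ) T, HasDerivWithinAt u (u' s) (Set.Ici s) s :=
          fun s hs => (hud s (Set.Ico_subset_Icc_self hs)).hasDerivWithinAt
        -- the derivative bound
        have hbound : ∀ s ∈ Set.Icc (0:ℝ) T,
            |u' s| ≤ K * |u s| + K * (E * Real.exp (L * s)) := by
          intro s hs
          have h1 : |u' s| ≤ ‖f (Function.update (X I s) i (X (I+1) s i)) s - f (x s) s‖ := by
            have := norm_le_pi_norm
              (f (Function.update (X I s) i (X (I+1) s i)) s - f (x s) s) i
            simpa [Real.norm_eq_abs] using this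
          have h2 : ‖f (Function.update (X I s) i (X (I+1) s i)) s - f (x s) s‖ ≤
              K * ‖Function.update (X I s) i (X (I+1) s i) - x s‖ := by
            have := (hf s).dist_le_mul (Function.update (X I s) i (X (I+1) s i)) (x s)
            simpa [dist_eq_norm] using this
          have h3 : ‖Function.update (X I s) i (X (I+1) s i) - x s‖ ≤
              ‖X I s - x s‖ + |u s| := by
            apply pi_norm_le_iff_of_nonneg (by positivity) |>.2
            intro j
            by_cases hji : j = i
            · subst hji
              simp only [Pi.sub_apply, Function.update_self, Real.norm_eq_abs]
              have : 0 ≤ ‖X I s - x s‖ := norm_nonneg _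
              simp only [hu]
              nlinarith [abs_nonneg (X (I+1) s j - x s j)]
            · have hj : |X I s j - x s j| ≤ ‖X I s - x s‖ := by
                have := norm_le_pi_norm (X I s - x s) j
                simpa [Real.norm_eq_abs] using this
              simp only [Pi.sub_apply, Function.update_of_ne hji, Real.norm_eq_abs]
              nlinarith [abs_nonneg (u s)]
          have h4 : ‖X I s - x s‖ ≤ E * Real.exp (L * s) := by
            have := ih s hs
            simpa [hE] using this
          calc |u' s| ≤ K * ‖Function.update (X I s) i (X (I+1) s i) - x s‖ :=
                h1.trans h2
            _ ≤ K * (‖X I s - x s‖ + |u s|) := by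
                apply mul_le_mul_of_nonneg_left h3 hK0
            _ ≤ K * |u s| + K * (E * Real.exp (L * s)) := by nlinarith [h4]
        -- the comparison function B
        set B : ℝ → ℝ := fun s => (E / 2 + η) * (Real.exp (L * s) - 1) with hB
        set B' : ℝ → ℝ := fun s => (E / 2 + η) * (L * Real.exp (L * s)) with hB'
        have hBd : ∀ s, HasDerivAt B (B' s) s := by
          intro s
          have h1 : HasDerivAt (fun y : ℝ => Real.exp (L * y)) (Real.exp (L * s) * (L * 1)) s :=
            ((hasDerivAt_id' (𝕜 := ℝ) s).const_mul L).exp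
          have h2 := (h1.sub_const 1).const_mul (E / 2 + η)
          refine h2.congr_deriv ?_
          show _ = (E / 2 + η) * (L * Real.exp (L * s))
          ring
        have hB0 : ‖u 0‖ ≤ B 0 := by
          simp [hu, hB, hX0, hx0]
        have strict : ∀ s ∈ Set.Ico (0:ℝ) T, ‖u s‖ = B s → ‖u' s‖ < B' s := by
          intro s hs heq
          have hs' : s ∈ Set.Icc (0:ℝ) T := Set.Ico_subset_Icc_self hs
          have hb := hbound s hs'
          rw [Real.norm_eq_abs] at heq
          rw [Real.norm_eq_abs]
          have hexp : 0 < Real.exp (L * s) := Real.exp_pos _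
          have hexp1 : (1:ℝ) ≤ Real.exp (L * s) := Real.one_le_exp (mul_nonneg hL0 hs.1)
          calc |u' s| ≤ K * |u s| + K * (E * Real.exp (L * s)) := hb
            _ = K * ((E / 2 + η) * (Real.exp (L * s) - 1)) + K * (E * Real.exp (L * s)) := by
                rw [heq]
            _ < (E / 2 + η) * (L * Real.exp (L * s)) := by
                simp only [hL]
                nlinarith [mul_pos hη hexp, mul_nonneg (mul_nonneg hK0 hη.le) hexp.le,
                  mul_nonneg (mul_nonneg hK0 hE0) hexp.le, mul_nonneg hK0 hE0,
                  mul_nonneg hK0 hη.le, mul_nonneg hE0 hexp.le]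
            _ = B' s := rfl
        have := image_norm_le_of_norm_deriv_right_lt_deriv_boundary
          hucont hud' hB0 hBd strict
        intro s hs
        simpa [Real.norm_eq_abs] using this hs
      -- take η → 0 and combine components
      have comp0 : ∀ i : Fin n, |X (I+1) t i - x t i| ≤ E / 2 * Real.exp (L * t) := by
        intro i
        have hle : |X (I+1) t i - x t i| ≤ E / 2 * (Real.exp (L * t) - 1) := by
          apply le_of_forall_pos_le_add
          intro ε hε
          have hexpT : 0 < Real.exp (L * T) := Real.exp_pos _
          have hη : (0:ℝ) < ε / Real.exp (L * T) := by positivity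
          have h := comp i _ hη t ht
          have hexm : Real.exp (L * t) - 1 ≤ Real.exp (L * T) := by
            have : Real.exp (L * t) ≤ Real.exp (L * T) :=
              Real.exp_le_exp.2 (by nlinarith [ht.1, ht.2])
            linarith
          have hsub : 0 ≤ Real.exp (L * t) - 1 := by
            have : (1:ℝ) ≤ Real.exp (L * t) := Real.one_le_exp (by nlinarith [ht.1])
            linarith
          calc |X (I+1) t i - x t i| ≤ (E / 2 + ε / Real.exp (L * T)) * (Real.exp (L * t) - 1) := h
            _ = E / 2 * (Real.exp (L * t) - 1) + ε / Real.exp (L * T) * (Real.exp (L * t) - 1) := by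
                ring
            _ ≤ E / 2 * (Real.exp (L * t) - 1) + ε := by
                have : ε / Real.exp (L * T) * (Real.exp (L * t) - 1) ≤ ε := by
                  rw [div_mul_eq_mul_div, div_le_iff₀ hexpT]
                  nlinarith
                linarith
        have hexp1 : (1:ℝ) ≤ Real.exp (L * t) := Real.one_le_exp (by nlinarith [ht.1])
        nlinarith
      have : ‖X (I+1) t - x t‖ ≤ E / 2 * Real.exp (L * t) := by
        apply pi_norm_le_iff_of_nonneg (by positivity) |>.2
        intro i
        simpa [Real.norm_eq_abs] using comp0 i
      calc ‖X (I+1) t - x t‖ ≤ E / 2 * Real.exp (L * t) := this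
        _ = M / 2 ^ (I+1) * Real.exp (L * t) := by
            rw [hE]; ring
  -- conclude uniform convergence
  rw [Metric.tendstoUniformlyOn_iff]
  intro ε hε
  have hlim : Filter.Tendsto (fun I : ℕ => M * Real.exp (L * T) / 2 ^ I) Filter.atTop
      (nhds 0) := by
    have h2 : Filter.Tendsto (fun I : ℕ => ((1:ℝ)/2) ^ I) Filter.atTop (nhds 0) :=
      tendsto_pow_atTop_nhds_zero_of_lt_one (by norm_num) (by norm_num)
    have := h2.const_mul (M * Real.exp (L * T))
    simpa [div_eq_mul_inv, mul_comm, mul_assoc, mul_left_comm, one_div, inv_pow] using this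
  have := hlim.eventually (gt_mem_nhds hε)
  filter_upwards [this] with I hI t ht
  have hb := key I t ht
  have hexp : Real.exp (L * t) ≤ Real.exp (L * T) :=
    Real.exp_le_exp.2 (by nlinarith [ht.1, ht.2])
  rw [dist_comm, dist_eq_norm]
  calc ‖X I t - x t‖ ≤ M / 2 ^ I * Real.exp (L * t) := hb
    _ ≤ M / 2 ^ I * Real.exp (L * T) := by
        apply mul_le_mul_of_nonneg_left hexp (by positivity)
    _ = M * Real.exp (L * T) / 2 ^ I := by ring
    _ < ε := hI
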